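/- Let u(t) = h(ω₁t, …, ω_n t) be an E-quasiperiodic function with h : 𝕋ⁿ → E continuous and 1-periodic in each variable, and suppose the exponents 2πω₁, …, 2πω_n are Fourier exponents of u (i.e. the corresponding Fourier coefficients are nonzero). Then h is strictly 1-periodic: if h(θ + θ') = h(θ) for all θ ∈ 𝕋ⁿ, then θ' = 0 in 𝕋ⁿ. -/

import Mathlib

open Filter Topology
namespace QPAux
open MeasureTheory Complex Set Submodule intervalIntegral
open scoped Real
noncomputable section
variable {n : ℕ}
local instance : Fact ((0:ℝ) < 1) := ⟨one_pos⟩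
abbrev 𝕏 (n : ℕ) := Fin n → AddCircle (1:ℝ)
def charF (m : Fin n → ℤ) : C(𝕏 n, ℂ) :=
  ⟨fun x => ∏ k, fourier (m k) (x k),
    continuous_finset_prod _ fun k _ =>
      (map_continuous (fourier (m k))).comp (continuous_apply k)⟩
@[simp] lemma charF_apply (m : Fin n → ℤ) (x : 𝕏 n) :
    charF m x = ∏ k, fourier (m k) (x k) := rfl
lemma charF_mul (m m' : Fin n → ℤ) : charF m * charF m' = charF (m + m') := by
  ext x
  simp only [ContinuousMap.mul_apply, charF_apply, Pi.add_apply, fourier_add]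
  rw [Finset.prod_mul_distrib]
lemma charF_zero : charF (0 : Fin n → ℤ) = 1 := by
  ext x; simp [fourier_zero]
lemma charF_star (m : Fin n → ℤ) : star (charF m) = charF (-m) := by
  ext x
  show (starRingEnd ℂ) (∏ k, (fourier (m k) (x k) : ℂ)) = _
  rw [map_prod]
  simp [← fourier_neg]

-- character additivity in the point
lemma fourier_point_add {N : ℤ} (a b : AddCircle (1:ℝ)) :
    fourier N (a + b) = fourier N a * fourier N b := by
  rw [fourier_apply, fourier_apply, fourier_apply, smul_add, AddCircle.toCircle_add]
  simp

lemma charF_point_add (m : Fin n → ℤ) (x y : 𝕏 n) :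
    charF m (x + y) = charF m x * charF m y := by
  simp only [charF_apply, Pi.add_apply, fourier_point_add]
  rw [Finset.prod_mul_distrib]

/-- The star subalgebra generated by the characters. -/
def charAlg (n : ℕ) : StarSubalgebra ℂ C(𝕏 n, ℂ) where
  toSubalgebra := Algebra.adjoin ℂ (range (charF (n := n)))
  star_mem' := by
    show Algebra.adjoin ℂ (range (charF (n := n))) ≤
      star (Algebra.adjoin ℂ (range (charF (n := n))))
    refine Algebra.adjoin_le ?_
    rintro - ⟨m, rfl⟩
    exact Algebra.subset_adjoin ⟨-m, (charF_star m).symm⟩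

lemma charAlg_coe :
    Subalgebra.toSubmodule (charAlg n).toSubalgebra = span ℂ (range (charF (n := n))) := by
  apply Algebra.adjoin_eq_span_of_subset
  refine Subset.trans ?_ Submodule.subset_span
  intro x hx
  refine Submonoid.closure_induction (fun _ => id) ⟨0, charF_zero⟩ ?_ hx
  rintro - - - - ⟨m, rfl⟩ ⟨m', rfl⟩
  exact ⟨m + m', (charF_mul m m').symm⟩

lemma charAlg_separatesPoints : (charAlg n).SeparatesPoints := by
  intro x y hxy
  obtain ⟨k, hk⟩ : ∃ k, x k ≠ y k := by
    by_contra hc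
    push_neg at hc
    exact hxy (funext hc)
  refine ⟨_, ⟨charF (Pi.single k 1), Algebra.subset_adjoin ⟨Pi.single k 1, rfl⟩, rfl⟩, ?_⟩
  have hval : ∀ z : 𝕏 n, charF (Pi.single k 1) z = fourier 1 (z k) := by
    intro z
    rw [charF_apply]
    rw [Finset.prod_eq_single k (fun b _ hb => by simp [Pi.single_eq_of_ne hb, fourier_zero])
      (fun hk' => absurd (Finset.mem_univ k) hk')]
    simp
  dsimp only
  rw [hval, hval, fourier_one, fourier_one]
  intro hc
  rw [Circle.coe_inj] at hc
  exact hk (AddCircle.injective_toCircle one_ne_zero hc)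

lemma span_charF_dense :
    (span ℂ (range (charF (n := n)))).topologicalClosure = ⊤ := by
  rw [← charAlg_coe]
  exact congr_arg (Subalgebra.toSubmodule <| StarSubalgebra.toSubalgebra ·)
    (ContinuousMap.starSubalgebra_topologicalClosure_eq_top_of_separatesPoints _
      charAlg_separatesPoints)

lemma exists_char_approx (f : C(𝕏 n, ℂ)) {ε : ℝ} (hε : 0 < ε) :
    ∃ P ∈ span ℂ (range (charF (n := n))), ‖f - P‖ < ε := by
  have hf : f ∈ closure ((span ℂ (range (charF (n := n)))) : Set C(𝕏 n, ℂ)) := by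
    have := span_charF_dense (n := n)
    rw [← Submodule.topologicalClosure_coe] at *
    rw [this]
    trivial
  obtain ⟨P, hP, hPd⟩ := Metric.mem_closure_iff.1 hf ε hε
  exact ⟨P, hP, by rwa [← dist_eq_norm]⟩


/-! ### Measure facts -/

lemma volume_addCircle_one : (volume : Measure (AddCircle (1:ℝ))) = AddCircle.haarAddCircle := by
  rw [AddCircle.volume_eq_smul_haarAddCircle]
  simp

instance : IsProbabilityMeasure (volume : Measure (𝕏 n)) := by
  constructor
  rw [MeasureTheory.volume_pi, MeasureTheory.Measure.pi_univ]
  simp [AddCircle.measure_univ]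

lemma integrable_of_continuous {Y E' : Type*} [TopologicalSpace Y] [CompactSpace Y]
    [MeasurableSpace Y] [OpensMeasurableSpace Y] {μ : Measure Y} [IsFiniteMeasure μ]
    [NormedAddCommGroup E'] {f : Y → E'} (hf : Continuous f) : Integrable f μ :=
  hf.integrable_of_hasCompactSupport (isClosed_tsupport f).isCompact

lemma integral_fourier_addCircle {N : ℤ} (hN : N ≠ 0) :
    ∫ x, fourier N x ∂(volume : Measure (AddCircle (1:ℝ))) = 0 := by
  rw [volume_addCircle_one]
  exact integral_eq_zero_of_add_right_eq_neg
    (fourier_add_half_inv_index hN one_pos)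

lemma integral_charF {m : Fin n → ℤ} (hm : m ≠ 0) :
    ∫ x, charF m x ∂(volume : Measure (𝕏 n)) = 0 := by
  have : ∫ x : 𝕏 n, ∏ k, (fourier (m k) (x k) : ℂ) = ∏ k, ∫ x, (fourier (m k) x : ℂ) :=
    MeasureTheory.integral_fintype_prod_eq_prod
      (fun k (x : AddCircle (1:ℝ)) => (fourier (m k) x : ℂ))
  simp only [charF_apply]
  rw [this]
  obtain ⟨k, hk⟩ := Function.ne_iff.1 hm
  exact Finset.prod_eq_zero (Finset.mem_univ k) (integral_fourier_addCircle hk)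

/-! ### The line and time averages -/

def pmap (θ : Fin n → ℝ) : 𝕏 n := fun k => (θ k : AddCircle (1:ℝ))

lemma pmap_continuous : Continuous (pmap (n := n)) :=
  continuous_pi fun k => (AddCircle.continuous_mk' 1).comp (continuous_apply k)

lemma pmap_add (θ θ' : Fin n → ℝ) : pmap (θ + θ') = pmap θ + pmap θ' := by
  funext k; simp [pmap]

def lineMap (ω : Fin n → ℝ) (t : ℝ) : 𝕏 n := pmap fun k => ω k * t

lemma lineMap_continuous (ω : Fin n → ℝ) : Continuous (lineMap ω) :=
  pmap_continuous.comp (continuous_pi fun k => (continuous_const.mul continuous_id))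

lemma charF_line (ω : Fin n → ℝ) (m : Fin n → ℤ) (t : ℝ) :
    charF m (lineMap ω t) =
      Complex.exp ((((2 * π * (∑ k, (m k : ℝ) * ω k)) * t : ℝ) : ℂ) * Complex.I) := by
  simp only [charF_apply, lineMap, pmap, fourier_coe_apply]
  rw [← Complex.exp_sum]
  congr 1
  push_cast
  rw [Finset.mul_sum, Finset.sum_mul, Finset.sum_mul]
  refine Finset.sum_congr rfl fun k _ => by ring

lemma tendsto_avg_exp {c : ℝ} (hc : c ≠ 0) :
    Tendsto (fun T : ℝ => (1 / T : ℝ) •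
      ∫ t in (0:ℝ)..T, Complex.exp (((c * t : ℝ) : ℂ) * Complex.I)) atTop (𝓝 0) := by
  have key : ∀ T : ℝ, ∫ t in (0:ℝ)..T, Complex.exp (((c * t : ℝ) : ℂ) * Complex.I) =
      (Complex.exp ((c : ℂ) * Complex.I * T) - 1) / ((c : ℂ) * Complex.I) := by
    intro T
    have h1 : ∀ t : ℝ, (((c * t : ℝ) : ℂ) * Complex.I) = ((c : ℂ) * Complex.I) * (t : ℂ) := by
      intro t; push_cast; ring
    simp_rw [h1]
    rw [integral_exp_mul_complex (by
      simp [Complex.ext_iff, hc, Complex.I_ne_zero, mul_ne_zero]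
      )]
    simp
  apply squeeze_zero_norm' (a := fun T : ℝ => (2 / |c|) * (1 / T))
  · filter_upwards [eventually_ge_atTop (1:ℝ)] with T hT
    rw [key, norm_smul]
    have hbound : ‖(Complex.exp ((c : ℂ) * Complex.I * T) - 1) / ((c : ℂ) * Complex.I)‖
        ≤ 2 / |c| := by
      rw [norm_div]
      have hnum : ‖Complex.exp ((c : ℂ) * Complex.I * T) - 1‖ ≤ 2 := by
        have h2 : ((c : ℂ) * Complex.I * T) = ((c * T : ℝ) : ℂ) * Complex.I := by push_cast; ring
        rw [h2]
        refine (norm_sub_le _ _).trans ?_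
        rw [Complex.norm_exp_ofReal_mul_I]
        norm_num
      have hden : ‖(c : ℂ) * Complex.I‖ = |c| := by
        simp
      rw [hden]
      gcongr
    rw [Real.norm_eq_abs, abs_of_pos (by positivity : (0:ℝ) < 1/T)]
    calc (1/T) * ‖(Complex.exp ((c : ℂ) * Complex.I * T) - 1) / ((c : ℂ) * Complex.I)‖
        ≤ (1/T) * (2/|c|) := by gcongr
      _ = (2/|c|) * (1/T) := by ring
  · have h0 : Tendsto (fun T : ℝ => (1:ℝ) / T) atTop (𝓝 (0:ℝ)) := by
      simpa [one_div] using (tendsto_inv_atTop_zero : Tendsto (fun r : ℝ => r⁻¹) atTop (𝓝 (0:ℝ)))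
    simpa using h0.const_mul (2/|c|)

lemma weyl_charF (ω : Fin n → ℝ)
    (hind : ∀ a : Fin n → ℤ, (∑ j, (a j : ℝ) * ω j) = 0 → a = 0) (m : Fin n → ℤ) :
    Tendsto (fun T : ℝ => (1 / T : ℝ) • ∫ t in (0:ℝ)..T, charF m (lineMap ω t)) atTop
      (𝓝 (∫ x, charF m x ∂(volume : Measure (𝕏 n)))) := by
  rcases eq_or_ne m 0 with rfl | hm
  · have h1 : ∀ x : 𝕏 n, charF (0 : Fin n → ℤ) x = 1 := fun x => by
      rw [charF_zero]; rfl
    have hInt : ∫ x, charF (0 : Fin n → ℤ) x ∂(volume : Measure (𝕏 n)) = 1 := by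
      simp only [h1]
      simp
    rw [hInt]
    have heq : ∀ᶠ T : ℝ in atTop,
        (1 / T : ℝ) • ∫ t in (0:ℝ)..T, charF (0 : Fin n → ℤ) (lineMap ω t) = 1 := by
      filter_upwards [eventually_ge_atTop (1:ℝ)] with T hT
      have hT0 : T ≠ 0 := by linarith
      simp only [h1, intervalIntegral.integral_const, sub_zero]
      rw [smul_smul]
      norm_num [hT0]
    exact Tendsto.congr' (EventuallyEq.symm heq) tendsto_const_nhds
  · rw [integral_charF hm]
    have hne : (2 * π * (∑ k, (m k : ℝ) * ω k)) ≠ 0 := by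
      intro hzero
      have hsum : (∑ k, (m k : ℝ) * ω k) = 0 := by
        have h2π : (2 * π : ℝ) ≠ 0 := by positivity
        rcases mul_eq_zero.1 hzero with hc | hc
        · exact absurd hc h2π
        · exact hc
      exact hm (hind m hsum)
    have := tendsto_avg_exp hne
    simp_rw [charF_line]
    exact this

lemma weyl_span (ω : Fin n → ℝ)
    (hind : ∀ a : Fin n → ℤ, (∑ j, (a j : ℝ) * ω j) = 0 → a = 0)
    {P : C(𝕏 n, ℂ)} (hP : P ∈ span ℂ (range (charF (n := n)))) :
    Tendsto (fun T : ℝ => (1 / T : ℝ) • ∫ t in (0:ℝ)..T, P (lineMap ω t)) atTop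
      (𝓝 (∫ x, P x ∂(volume : Measure (𝕏 n)))) := by
  induction hP using Submodule.span_induction with
  | mem P hPm =>
    obtain ⟨m, rfl⟩ := hPm
    exact weyl_charF ω hind m
  | zero => simpa using tendsto_const_nhds
  | add P Q hPm hQm hP hQ =>
    have hfun : ∀ T : ℝ, (1 / T : ℝ) • ∫ t in (0:ℝ)..T, (P + Q) (lineMap ω t)
        = ((1 / T : ℝ) • ∫ t in (0:ℝ)..T, P (lineMap ω t))
          + ((1 / T : ℝ) • ∫ t in (0:ℝ)..T, Q (lineMap ω t)) := by
      intro T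
      rw [← smul_add]
      congr 1
      simp only [ContinuousMap.add_apply]
      exact intervalIntegral.integral_add
        ((P.continuous.comp (lineMap_continuous ω)).intervalIntegrable _ _)
        ((Q.continuous.comp (lineMap_continuous ω)).intervalIntegrable _ _)
    have hint : ∫ x, (P + Q) x ∂(volume : Measure (𝕏 n))
        = (∫ x, P x ∂(volume : Measure (𝕏 n))) + ∫ x, Q x ∂(volume : Measure (𝕏 n)) := by
      simp only [ContinuousMap.add_apply]
      exact integral_add (integrable_of_continuous P.continuous)
        (integrable_of_continuous Q.continuous)
    rw [hint]
    exact (hP.add hQ).congr (fun T => (hfun T).symm)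
  | smul c P hPm hP =>
    have hfun : ∀ T : ℝ, (1 / T : ℝ) • ∫ t in (0:ℝ)..T, (c • P) (lineMap ω t)
        = c • ((1 / T : ℝ) • ∫ t in (0:ℝ)..T, P (lineMap ω t)) := by
      intro T
      simp only [ContinuousMap.smul_apply]
      rw [intervalIntegral.integral_smul, smul_comm]
    have hint : ∫ x, (c • P) x ∂(volume : Measure (𝕏 n))
        = c • ∫ x, P x ∂(volume : Measure (𝕏 n)) := by
      simp only [ContinuousMap.smul_apply]
      exact integral_smul c _
    rw [hint]
    exact (hP.const_smul c).congr fun T => (hfun T).symm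

theorem weyl (ω : Fin n → ℝ)
    (hind : ∀ a : Fin n → ℤ, (∑ j, (a j : ℝ) * ω j) = 0 → a = 0)
    (f : C(𝕏 n, ℂ)) :
    Tendsto (fun T : ℝ => (1 / T : ℝ) • ∫ t in (0:ℝ)..T, f (lineMap ω t)) atTop
      (𝓝 (∫ x, f x ∂(volume : Measure (𝕏 n)))) := by
  rw [Metric.tendsto_nhds]
  intro ε hε
  obtain ⟨P, hPmem, hPnorm⟩ := exists_char_approx f (show (0:ℝ) < ε/4 by linarith)
  have hPtend := weyl_span ω hind hPmem
  have hPd : ∀ᶠ T : ℝ in atTop,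
      dist ((1 / T : ℝ) • ∫ t in (0:ℝ)..T, P (lineMap ω t))
        (∫ x, P x ∂(volume : Measure (𝕏 n))) < ε/4 :=
    Metric.tendsto_nhds.1 hPtend _ (by linarith)
  have hsup : ∀ x : 𝕏 n, ‖f x - P x‖ ≤ ε/4 := by
    intro x
    calc ‖f x - P x‖ = ‖(f - P) x‖ := by simp
      _ ≤ ‖f - P‖ := ContinuousMap.norm_coe_le_norm _ _
      _ ≤ ε/4 := hPnorm.le
  filter_upwards [hPd, eventually_ge_atTop (1:ℝ)] with T hT1 hT2
  have hT0 : (0:ℝ) < T := by linarith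
  -- first: distance between the two time averages
  have havg : ‖((1 / T : ℝ) • ∫ t in (0:ℝ)..T, f (lineMap ω t))
      - (1 / T : ℝ) • ∫ t in (0:ℝ)..T, P (lineMap ω t)‖ ≤ ε/4 := by
    rw [← smul_sub]
    have hsub : (∫ t in (0:ℝ)..T, f (lineMap ω t)) - ∫ t in (0:ℝ)..T, P (lineMap ω t)
        = ∫ t in (0:ℝ)..T, (f (lineMap ω t) - P (lineMap ω t)) :=
      (intervalIntegral.integral_sub
        ((f.continuous.comp (lineMap_continuous ω)).intervalIntegrable _ _)
        ((P.continuous.comp (lineMap_continuous ω)).intervalIntegrable _ _)).symm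
    rw [hsub, norm_smul, Real.norm_eq_abs, abs_of_pos (by positivity : (0:ℝ) < 1/T)]
    have hbd : ‖∫ t in (0:ℝ)..T, (f (lineMap ω t) - P (lineMap ω t))‖ ≤ (ε/4) * |T - 0| :=
      intervalIntegral.norm_integral_le_of_norm_le_const fun t _ => hsup _
    calc (1/T) * ‖∫ t in (0:ℝ)..T, (f (lineMap ω t) - P (lineMap ω t))‖
        ≤ (1/T) * ((ε/4) * |T - 0|) := by gcongr
      _ = ε/4 := by
          rw [sub_zero, abs_of_pos hT0]
          field_simp
  -- third: distance between the two space averages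
  have hsp : ‖(∫ x, P x ∂(volume : Measure (𝕏 n))) - ∫ x, f x ∂(volume : Measure (𝕏 n))‖
      ≤ ε/4 := by
    have hsub : (∫ x, P x ∂(volume : Measure (𝕏 n))) - ∫ x, f x ∂(volume : Measure (𝕏 n))
        = ∫ x, (P x - f x) ∂(volume : Measure (𝕏 n)) :=
      (integral_sub (integrable_of_continuous P.continuous)
        (integrable_of_continuous f.continuous)).symm
    rw [hsub]
    calc ‖∫ x, (P x - f x) ∂(volume : Measure (𝕏 n))‖
        ≤ (ε/4) * ((volume : Measure (𝕏 n)) univ).toReal := by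
          apply MeasureTheory.norm_integral_le_of_norm_le_const
          filter_upwards with x
          rw [norm_sub_rev]
          exact hsup x
      _ = ε/4 := by simp
  have := dist_triangle4 ((1 / T : ℝ) • ∫ t in (0:ℝ)..T, f (lineMap ω t))
    ((1 / T : ℝ) • ∫ t in (0:ℝ)..T, P (lineMap ω t))
    (∫ x, P x ∂(volume : Measure (𝕏 n))) (∫ x, f x ∂(volume : Measure (𝕏 n)))
  simp only [dist_eq_norm] at this hT1 ⊢
  refine lt_of_le_of_lt this ?_
  linarith [havg, hsp]

end
end QPAux

open QPAux MeasureTheory Complex Set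

noncomputable section Main

open scoped Real

local instance : Fact ((0:ℝ) < 1) := ⟨one_pos⟩

/-- If `u(t) = h(ω₁t,…,ω_nt)` with `h` continuous and `ℤⁿ`-periodic, the `ω_j` rationally
independent, and each exponent `2πω_j` is a Fourier exponent of `u` (the corresponding
Bohr–Fourier coefficient is nonzero), then `h` is strictly 1-periodic: any `θ'` with
`h(θ + θ') = h(θ)` for all `θ` has all coordinates integer (i.e. `θ' = 0` in `𝕋ⁿ`). -/
theorem strictly_periodic_of_fourier_exponents {E : Type*} [NormedAddCommGroup E]
    [NormedSpace ℂ E] [CompleteSpace E] {n : ℕ} (ω : Fin n → ℝ)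
    (hind : ∀ a : Fin n → ℤ, (∑ j, (a j : ℝ) * ω j) = 0 → a = 0)
    (h : (Fin n → ℝ) → E) (hcont : Continuous h)
    (hper : ∀ (θ : Fin n → ℝ) (m : Fin n → ℤ), h (θ + fun j => (m j : ℝ)) = h θ)
    (u : ℝ → E) (hu : ∀ t : ℝ, u t = h (fun j => ω j * t))
    (hfourier : ∀ j : Fin n, ∃ U : E, U ≠ 0 ∧
      Tendsto (fun T : ℝ => (1 / T) •
          ∫ t in (0 : ℝ)..T, Complex.exp (-(Complex.I * 2 * Real.pi * ω j * t)) • u t)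
        atTop (𝓝 U))
    (θ' : Fin n → ℝ) (hθ' : ∀ θ : Fin n → ℝ, h (θ + θ') = h θ) :
    ∀ j : Fin n, ∃ m : ℤ, θ' j = (m : ℝ) := by
  intro j
  -- continuity of u
  have hucont : Continuous u := by
    have : u = fun t => h fun k => ω k * t := funext hu
    rw [this]
    exact hcont.comp (continuous_pi fun k => continuous_const.mul continuous_id)
  -- the projection map is a quotient map
  have hopen : IsOpenMap (pmap (n := n)) :=
    IsOpenMap.piMap (fun _ => QuotientAddGroup.isOpenMap_coe)
      (Filter.Eventually.of_forall fun _ => QuotientAddGroup.mk_surjective)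
  have hsurj : Function.Surjective (pmap (n := n)) := by
    intro x
    exact ⟨fun k => Quotient.out (x k), funext fun k => QuotientAddGroup.out_eq' (x k)⟩
  have hquot : Topology.IsQuotientMap (pmap (n := n)) :=
    hopen.isQuotientMap pmap_continuous hsurj
  -- the lift of h to the torus
  set hbar : 𝕏 n → E := fun x => h fun k => Quotient.out (x k) with hbar_def
  have hout : ∀ θ : Fin n → ℝ, hbar (pmap θ) = h θ := by
    intro θ
    have hex : ∀ k : Fin n, ∃ z : ℤ, (Quotient.out (pmap θ k) : ℝ) = θ k + z := by
      intro k
      have h1 : ((Quotient.out (pmap θ k) : ℝ) : AddCircle (1:ℝ)) = ((θ k : ℝ) : AddCircle (1:ℝ)) :=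
        QuotientAddGroup.out_eq' _
      have h2 := (QuotientAddGroup.eq (s := AddSubgroup.zmultiples (1:ℝ))).1 h1
      obtain ⟨z, hz⟩ := (AddSubgroup.mem_zmultiples_iff).1 h2
      refine ⟨-z, ?_⟩
      have : (z : ℝ) = -Quotient.out (pmap θ k) + θ k := by simpa using hz
      push_cast
      linarith [this]
    choose m hm using hex
    show h (fun k => (Quotient.out (pmap θ k) : ℝ)) = h θ
    have : (fun k => (Quotient.out (pmap θ k) : ℝ)) = θ + fun k => ((m k : ℤ) : ℝ) := by
      funext k
      simpa using hm k
    rw [this, hper]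
  have hbar_cont : Continuous hbar := by
    rw [hquot.continuous_iff]
    have : hbar ∘ pmap = h := funext hout
    rw [this]
    exact hcont
  have hbar_inv : ∀ x : 𝕏 n, hbar (x + pmap θ') = hbar x := by
    intro x
    obtain ⟨θ, rfl⟩ := hsurj x
    rw [← pmap_add, hout, hout, hθ']
  obtain ⟨U, hU0, hUlim⟩ := hfourier j
  -- the main integral
  set F : 𝕏 n → E := fun x => (fourier (-1) (x j) : ℂ) • hbar x with F_def
  have hFcont : Continuous F :=
    (((map_continuous (fourier (-1))).comp (continuous_apply j)).smul hbar_cont :)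
  have hFint : Integrable F (volume : Measure (𝕏 n)) := integrable_of_continuous hFcont
  set I : E := ∫ x, F x ∂(volume : Measure (𝕏 n)) with I_def
  -- Step 1: U = I
  have hUI : U = I := by
    refine (NormedSpace.eq_iff_forall_dual_eq ℂ).2 fun ℓ => ?_
    set fl : C(𝕏 n, ℂ) := ⟨fun x => (fourier (-1) (x j) : ℂ) * ℓ (hbar x),
      ((map_continuous (fourier (-1))).comp (continuous_apply j)).mul
        (ℓ.continuous.comp hbar_cont)⟩ with fl_def
    have hweyl := weyl ω hind fl
    have hpoint : ∀ t : ℝ,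
        fl (lineMap ω t) = ℓ (Complex.exp (-(Complex.I * 2 * Real.pi * ω j * t)) • u t) := by
      intro t
      have h1 : (lineMap ω t) j = ((ω j * t : ℝ) : AddCircle (1:ℝ)) := rfl
      have h2 : hbar (lineMap ω t) = u t := by
        rw [show lineMap ω t = pmap (fun k => ω k * t) from rfl, hout, ← hu]
      have h3 : (fourier (-1) ((lineMap ω t) j) : ℂ)
          = Complex.exp (-(Complex.I * 2 * Real.pi * ω j * t)) := by
        rw [h1, fourier_coe_apply]
        congr 1
        push_cast
        ring
      show (fourier (-1) ((lineMap ω t) j) : ℂ) * ℓ (hbar (lineMap ω t)) = _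
      rw [h2, h3, ℓ.map_smul, smul_eq_mul]
    have heq : ∀ T : ℝ,
        ℓ ((1 / T) • ∫ t in (0:ℝ)..T,
            Complex.exp (-(Complex.I * 2 * Real.pi * ω j * t)) • u t)
          = (1 / T : ℝ) • ∫ t in (0:ℝ)..T, fl (lineMap ω t) := by
      intro T
      rw [ContinuousLinearMap.map_smul_of_tower]
      congr 1
      have hcv : Continuous fun t : ℝ =>
          Complex.exp (-(Complex.I * 2 * Real.pi * ω j * t)) • u t :=
        (Complex.continuous_exp.comp
          ((continuous_const.mul Complex.continuous_ofReal).neg)).smul hucont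
      rw [← ℓ.intervalIntegral_comp_comm (hcv.intervalIntegrable _ _)]
      exact intervalIntegral.integral_congr fun t _ => (hpoint t).symm
    have hl1 : Tendsto (fun T : ℝ => (1 / T : ℝ) • ∫ t in (0:ℝ)..T, fl (lineMap ω t))
        atTop (𝓝 (ℓ U)) := by
      have := (ℓ.continuous.tendsto U).comp hUlim
      exact this.congr fun T => heq T
    have hl2 := tendsto_nhds_unique hl1 hweyl
    rw [hl2]
    have : ∀ x : 𝕏 n, fl x = ℓ (F x) := by
      intro x
      show (fourier (-1) (x j) : ℂ) * ℓ (hbar x) = ℓ ((fourier (-1) (x j) : ℂ) • hbar x)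
      rw [ℓ.map_smul, smul_eq_mul]
    calc ∫ x, fl x ∂(volume : Measure (𝕏 n)) = ∫ x, ℓ (F x) ∂(volume : Measure (𝕏 n)) := by
          simp_rw [this]
      _ = ℓ I := ContinuousLinearMap.integral_comp_comm ℓ hFint
  -- Step 2: invariance gives I = c • I
  set c : ℂ := (fourier (-1) ((pmap θ' : 𝕏 n) j) : ℂ) with c_def
  have hshift : ∫ x, F (pmap θ' + x) ∂(volume : Measure (𝕏 n)) = I :=
    MeasureTheory.integral_add_left_eq_self F (pmap θ')
  have hFtrans : ∀ x : 𝕏 n, F (pmap θ' + x) = c • F x := by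
    intro x
    show (fourier (-1) ((pmap θ' + x) j) : ℂ) • hbar (pmap θ' + x)
        = c • ((fourier (-1) (x j) : ℂ) • hbar x)
    have h1 : hbar (pmap θ' + x) = hbar x := by rw [add_comm]; exact hbar_inv x
    have h2 : (fourier (-1) ((pmap θ' + x) j) : ℂ)
        = c * (fourier (-1) (x j) : ℂ) := by
      show (fourier (-1) ((pmap θ' j) + x j) : ℂ) = _
      rw [fourier_point_add]
    rw [h1, h2, mul_smul]
  have hcI : I = c • I := by
    calc I = ∫ x, F (pmap θ' + x) ∂(volume : Measure (𝕏 n)) := hshift.symm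
      _ = ∫ x, c • F x ∂(volume : Measure (𝕏 n)) := by simp_rw [hFtrans]
      _ = c • I := integral_smul c F
  -- Step 3: conclude c = 1 and extract the integer
  have hI0 : I ≠ 0 := hUI ▸ hU0
  have hc1 : c = 1 := by
    have hz : (1 - c) • I = 0 := by
      rw [sub_smul, one_smul, ← hcI, sub_self]
    rcases smul_eq_zero.1 hz with hc | hc
    · have : c = 1 := by linear_combination -hc
      exact this
    · exact absurd hc hI0
  have c_eval : c = Complex.exp (2 * (Real.pi : ℂ) * Complex.I * ((-1 : ℤ) : ℂ)
      * ((θ' j : ℝ) : ℂ) / ((1:ℝ) : ℂ)) := by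
    rw [c_def]
    exact fourier_coe_apply
  have hcval : Complex.exp (2 * (Real.pi : ℂ) * Complex.I * ((-1 : ℤ) : ℂ)
      * ((θ' j : ℝ) : ℂ) / ((1:ℝ) : ℂ)) = 1 := by rw [← c_eval]; exact hc1
  obtain ⟨k, hk⟩ := Complex.exp_eq_one_iff.1 hcval
  refine ⟨-k, ?_⟩
  have hne : (2 * (Real.pi : ℂ) * Complex.I) ≠ 0 := by
    simp [Real.pi_ne_zero, Complex.I_ne_zero]
  have h2 : (-(θ' j : ℂ)) * (2 * (Real.pi : ℂ) * Complex.I)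
      = (k : ℂ) * (2 * (Real.pi : ℂ) * Complex.I) := by
    push_cast at hk
    linear_combination hk
  have h3 : (-(θ' j : ℂ)) = (k : ℂ) := mul_right_cancel₀ hne h2
  have h4 : ((θ' j : ℝ) : ℂ) = ((-k : ℤ) : ℂ) := by push_cast; linear_combination -h3
  exact_mod_cast h4

end Main
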